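/- Let m ≥ 2 be an integer, put n = 2m−1, and let a, b be real numbers with a > 0, b > 0 and nb > a. For k = 1, …, n with k ≠ m, set y_k = 1 + cos((2k−1)π/n) + i·sin((2k−1)π/n). Then the Lauricella function of the n−1 = 2m−2 arguments y_1, …, y_{m−1}, y_{m+1}, …, y_n satisfies F_D^{(2m−2)}(nb−a; b, …, b; nb | y_1, …, y_{m−1}, y_{m+1}, …, y_n) = (1/n) · Γ(a/n)·Γ(nb)·Γ((nb−a)/n) / (Γ(a)·Γ(b)·Γ(nb−a)). -/

import Mathlib

open MeasureTheory

noncomputable def lauricellaFD (n : ℕ) (a : ℂ) (b : Fin n → ℂ) (c : ℂ) (x : Fin n → ℂ) : ℂ :=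
  (Complex.Gamma c / (Complex.Gamma a * Complex.Gamma (c - a))) *
    ∫ u in (0:ℝ)..1, (u : ℂ) ^ (a - 1) * ((1 : ℂ) - u) ^ (c - a - 1) *
      ∏ k, ((1 : ℂ) - x k * u) ^ (-(b k))

noncomputable def appellF1 (a b₁ b₂ c x₁ x₂ : ℂ) : ℂ :=
  lauricellaFD 2 a ![b₁, b₂] c ![x₁, x₂]

noncomputable def ellipticK (k : ℝ) : ℝ :=
  ∫ θ in (0:ℝ)..(Real.pi/2), (1 - k ^ 2 * Real.sin θ ^ 2) ^ (-(1:ℝ)/2)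

open Finset Set in
open Finset in
noncomputable def zroot (n k : ℕ) : ℂ :=
  Complex.exp (((2*(k:ℝ)-1)*Real.pi/(n:ℝ) : ℝ) * Complex.I)

open Finset Set in
lemma prod_one_sub (n : ℕ) (hn : 0 < n) (u : ℂ) :
    ∏ i ∈ Finset.range n, ((1:ℂ) - (1 + zroot n (i+1)) * u) = (1-u)^n + u^n := by
  have hprim := Complex.isPrimitiveRoot_exp n hn.ne'
  set ω : ℂ := Complex.exp (2*Real.pi*Complex.I/n) with hω
  set α : ℂ := Complex.exp (Real.pi*Complex.I/n) * u with hα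
  have hαn : α ^ n = -(u^n) := by
    rw [hα, mul_pow, ← Complex.exp_nat_mul]
    have : (n:ℂ) * (Real.pi*Complex.I/n) = Real.pi*Complex.I := by
      have : (n:ℂ) ≠ 0 := Nat.cast_ne_zero.mpr hn.ne'
      field_simp
    rw [this, Complex.exp_pi_mul_I]
    ring
  have key := X_pow_sub_C_eq_prod hprim hn hαn
  have := congrArg (Polynomial.eval (1-u)) key
  simp only [Polynomial.eval_sub, Polynomial.eval_pow, Polynomial.eval_X, Polynomial.eval_C,
    Polynomial.eval_prod, Polynomial.eval_mul] at this
  rw [sub_neg_eq_add] at this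
  rw [this]
  apply Finset.prod_congr rfl
  intro i hi
  have hz : zroot n (i+1) * u = ω ^ i * α := by
    rw [hα, hω, zroot, ← Complex.exp_nat_mul, ← mul_assoc, ← Complex.exp_add]
    congr 1
    push_cast
    ring
  rw [← hz]; ring

open Finset Set in
lemma cpow_mul_conj_cpow {v : ℂ} (hv : v.im ≠ 0) (s : ℝ) :
    v ^ (s:ℂ) * (starRingEnd ℂ) v ^ (s:ℂ) = ((Complex.normSq v ^ s : ℝ) : ℂ) := by
  have harg : v.arg ≠ Real.pi := by
    intro h
    rw [Complex.arg_eq_pi_iff] at h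
    exact hv h.2
  rw [Complex.conj_cpow _ _ harg, Complex.conj_ofReal]
  rw [Complex.mul_conj]
  congr 1
  rw [Complex.normSq_eq_norm_sq, Complex.normSq_eq_norm_sq, Complex.norm_cpow_real]
  rw [← Real.rpow_natCast (‖v‖ ^ s) 2, ← Real.rpow_natCast ‖v‖ 2,
    ← Real.rpow_mul (norm_nonneg v), ← Real.rpow_mul (norm_nonneg v)]
  ring_nf

open Finset Set in
lemma zroot_conj (m : ℕ) (hm : 2 ≤ m) (j : ℕ) (hj : j < m - 1) :
    zroot (2*m-1) (2*m-1-j) = (starRingEnd ℂ) (zroot (2*m-1) (j+1)) := by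
  unfold zroot
  rw [← Complex.exp_conj, map_mul, Complex.conj_ofReal, Complex.conj_I]
  rw [show (((2*(((2*m-1-j):ℕ)):ℝ)-1)*Real.pi/((2*m-1:ℕ):ℝ) : ℝ)
      = 2*Real.pi - ((2*((j+1:ℕ):ℝ)-1)*Real.pi/((2*m-1:ℕ):ℝ) : ℝ) from ?_]
  · rw [Complex.ofReal_sub, sub_mul, Complex.exp_sub]
    rw [show ((2*Real.pi:ℝ):ℂ) * Complex.I = 2*(Real.pi:ℂ)*Complex.I by push_cast; ring,
      Complex.exp_two_pi_mul_I]
    rw [mul_neg, Complex.exp_neg, one_div]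
  · have hN : ((2*m-1:ℕ):ℝ) = 2*(m:ℝ)-1 := by
      push_cast [Nat.cast_sub (by omega : 1 ≤ 2*m)]; ring
    have hj' : ((2*m-1-j:ℕ):ℝ) = 2*(m:ℝ)-1-(j:ℝ) := by
      push_cast [Nat.cast_sub (by omega : j ≤ 2*m-1), Nat.cast_sub (by omega : 1 ≤ 2*m)]; ring
    rw [hN, hj']
    have hne : (2*(m:ℝ)-1) ≠ 0 := by
      have : (2:ℝ) ≤ (m:ℝ) := by exact_mod_cast hm
      nlinarith
    push_cast
    field_simp
    ring

open Finset Set in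
lemma zroot_middle (m : ℕ) (hm : 2 ≤ m) : zroot (2*m-1) m = -1 := by
  unfold zroot
  have hN : ((2*m-1:ℕ):ℝ) = 2*(m:ℝ)-1 := by
    push_cast [Nat.cast_sub (by omega : 1 ≤ 2*m)]; ring
  have hne : (2*(m:ℝ)-1) ≠ 0 := by
    have : (2:ℝ) ≤ (m:ℝ) := by exact_mod_cast hm
    nlinarith
  rw [show ((2*(m:ℝ)-1)*Real.pi/((2*m-1:ℕ):ℝ) : ℝ) = Real.pi by rw [hN]; field_simp]
  exact Complex.exp_pi_mul_I

lemma zroot_im_pos (m : ℕ) (hm : 2 ≤ m) (j : ℕ) (hj : j < m - 1) :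
    0 < (zroot (2*m-1) (j+1)).im := by
  unfold zroot
  have h2 : ∀ θ:ℝ, (Complex.exp ((θ:ℂ)*Complex.I)).im = Real.sin θ := by
    intro θ
    rw [Complex.exp_mul_I, ← Complex.ofReal_cos, ← Complex.ofReal_sin]
    simp [Complex.sin_ofReal_re]
  rw [h2]
  have hN : ((2*m-1:ℕ):ℝ) = 2*(m:ℝ)-1 := by
    push_cast [Nat.cast_sub (by omega : 1 ≤ 2*m)]; ring
  have hm' : (2:ℝ) ≤ (m:ℝ) := by exact_mod_cast hm
  have hj' : (j:ℝ) ≤ (m:ℝ) - 2 := by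
    have : (j:ℝ) ≤ ((m-2:ℕ):ℝ) := by exact_mod_cast Nat.le_of_lt_succ (by omega : j < (m-2)+1)
    rwa [Nat.cast_sub hm] at this
    
  apply Real.sin_pos_of_pos_of_lt_pi
  · apply div_pos
    · apply mul_pos _ Real.pi_pos
      push_cast; linarith
    · rw [hN]; linarith
  · rw [hN, div_lt_iff₀ (by linarith)]
    have : (2*((j+1:ℕ):ℝ)-1) < 2*(m:ℝ)-1 := by push_cast; linarith
    nlinarith [Real.pi_pos]

open Finset Set in
lemma prod_cpow_eq (m : ℕ) (hm : 2 ≤ m) (b u : ℝ) (hu : u ∈ Set.Ioo (0:ℝ) 1) :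
    ∏ j : Fin (2*m-2), ((1:ℂ) -
        (1 + zroot (2*m-1) (if (j:ℕ)+1 < m then (j:ℕ)+1 else (j:ℕ)+2)) * (u:ℂ)) ^ (-(b:ℂ)) =
      ((((1-u)^(2*m-1) + u^(2*m-1)) ^ (-b) : ℝ) : ℂ) := by
  obtain ⟨hu0, hu1⟩ := hu
  set N := 2*m-1 with hN
  set F : ℕ → ℂ := fun i => 1 - (1 + zroot N (i+1)) * (u:ℂ) with hF
  -- conjugation property
  have hconj : ∀ j < m-1, F (2*m-2-j) = (starRingEnd ℂ) (F j) := by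
    intro j hj
    have h1 : 2*m-2-j+1 = 2*m-1-j := by omega
    have := zroot_conj m hm j hj
    simp only [hF, h1, hN, this]
    simp [Complex.conj_ofReal]
  have him : ∀ j < m-1, (F j).im ≠ 0 := by
    intro j hj
    have hz := zroot_im_pos m hm j hj
    have : (F j).im = -((zroot N (j+1)).im * u) := by
      simp [hF, Complex.sub_im, Complex.mul_im, Complex.add_im]
    rw [this]
    nlinarith
  -- reflect identity for plain product
  have hrefl : ∏ j ∈ range (m-1), (starRingEnd ℂ) (F j) = ∏ j ∈ range (m-1), F (m+j) := by
    rw [← Finset.prod_range_reflect (fun j => F (m+j)) (m-1)]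
    apply Finset.prod_congr rfl
    intro j hj
    rw [Finset.mem_range] at hj
    rw [show m+(m-1-1-j) = 2*m-2-j from by omega, hconj j hj]
  -- the plain product over pairs equals D
  have hDpos : 0 < (1-u)^N + u^N := by
    have h1 := pow_pos (by linarith : (0:ℝ) < 1-u) N
    have h2 := pow_pos hu0 N
    linarith
  have hprodD : ∏ j ∈ range (m-1), Complex.normSq (F j) = (1-u)^N + u^N := by
    apply Complex.ofReal_injective
    rw [Complex.ofReal_prod]
    have h1 : ∀ j ∈ range (m-1), ((Complex.normSq (F j) : ℝ) : ℂ)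
        = F j * (starRingEnd ℂ) (F j) := fun j _ => (Complex.mul_conj (F j)).symm
    rw [Finset.prod_congr rfl h1, Finset.prod_mul_distrib, hrefl]
    have hsplit : ∏ i ∈ range N, F i
        = (∏ j ∈ range (m-1), F j) * ∏ j ∈ range (m-1), F (m+j) := by
      rw [show N = m + (m-1) from by omega, Finset.prod_range_add]
      congr 1
      rw [show m = (m-1)+1 from by omega, Finset.prod_range_succ,
        show (m-1)+1 = m from by omega]
      have : F (m-1) = 1 := by
        simp [hF, show m-1+1 = m from by omega, show zroot N m = -1 from zroot_middle m hm]
      rw [this, mul_one]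
    rw [← hsplit, hF]
    simp only
    rw [prod_one_sub N (by omega) (u:ℂ)]
    push_cast
    ring
  -- now the cpow product
  have hbe : (-(b:ℂ)) = ((-b : ℝ) : ℂ) := by push_cast; ring
  rw [hbe]
  rw [show (2*m-2) = (m-1)+(m-1) from by omega]
  rw [Fin.prod_univ_eq_prod_range
    (fun j => ((1:ℂ) - (1 + zroot (2*m-1) (if j+1 < m then j+1 else j+2)) * (u:ℂ)) ^ ((-b:ℝ):ℂ))]
  rw [Finset.prod_range_add]
  have hfirst : ∀ j ∈ range (m-1),
      ((1:ℂ) - (1 + zroot (2*m-1) (if j+1 < m then j+1 else j+2)) * (u:ℂ)) ^ ((-b:ℝ):ℂ)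
        = F j ^ ((-b:ℝ):ℂ) := by
    intro j hj
    rw [Finset.mem_range] at hj
    rw [if_pos (by omega)]
  have hsecond : ∀ j ∈ range (m-1),
      ((1:ℂ) - (1 + zroot (2*m-1) (if (m-1+j)+1 < m then (m-1+j)+1 else (m-1+j)+2)) * (u:ℂ))
          ^ ((-b:ℝ):ℂ) = F (m+j) ^ ((-b:ℝ):ℂ) := by
    intro j hj
    rw [if_neg (by omega), show (m-1+j)+2 = m+j+1 from by omega]
  rw [Finset.prod_congr rfl hfirst, Finset.prod_congr rfl hsecond]
  have hrefl2 : ∏ j ∈ range (m-1), F (m+j) ^ ((-b:ℝ):ℂ)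
      = ∏ j ∈ range (m-1), ((starRingEnd ℂ) (F j)) ^ ((-b:ℝ):ℂ) := by
    rw [← Finset.prod_range_reflect (fun j => F (m+j) ^ ((-b:ℝ):ℂ)) (m-1)]
    apply Finset.prod_congr rfl
    intro j hj
    rw [Finset.mem_range] at hj
    rw [show m+(m-1-1-j) = 2*m-2-j from by omega, hconj j hj]
  rw [hrefl2, ← Finset.prod_mul_distrib]
  have hterm : ∀ j ∈ range (m-1),
      F j ^ ((-b:ℝ):ℂ) * ((starRingEnd ℂ) (F j)) ^ ((-b:ℝ):ℂ)
        = ((Complex.normSq (F j) ^ (-b) : ℝ) : ℂ) := by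
    intro j hj
    rw [Finset.mem_range] at hj
    exact cpow_mul_conj_cpow (him j hj) (-b)
  rw [Finset.prod_congr rfl hterm, ← Complex.ofReal_prod,
    Real.finset_prod_rpow _ _ (fun j _ => Complex.normSq_nonneg _) (-b), hprodD]

open Finset Set in
noncomputable def phiN (n : ℕ) (u : ℝ) : ℝ := u^n / (u^n + (1-u)^n)

open Finset Set in
lemma den_pos (n : ℕ) {u : ℝ} (hu : u ∈ Set.Ioo (0:ℝ) 1) : 0 < u^n + (1-u)^n := by
  obtain ⟨h0, h1⟩ := hu
  have := pow_pos h0 n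
  have := pow_pos (by linarith : (0:ℝ) < 1-u) n
  linarith

lemma phiN_hasDeriv (n : ℕ) (hn : 0 < n) {u : ℝ} (hu : u ∈ Set.Ioo (0:ℝ) 1) :
    HasDerivAt (phiN n) ((n:ℝ) * u^(n-1) * (1-u)^(n-1) / (u^n + (1-u)^n)^2) u := by
  have hden := (den_pos n hu).ne'
  have h1 : HasDerivAt (fun x : ℝ => x^n) ((n:ℝ) * u^(n-1)) u := by
    simpa using hasDerivAt_pow n u
  have h2 : HasDerivAt (fun x : ℝ => (1-x)^n) ((n:ℝ) * (1-u)^(n-1) * (-1)) u := by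
    exact HasDerivAt.fun_pow ((hasDerivAt_id u).const_sub 1) n
  have h3 : HasDerivAt (fun x : ℝ => x^n + (1-x)^n)
      ((n:ℝ) * u^(n-1) + (n:ℝ) * (1-u)^(n-1) * (-1)) u := h1.add h2
  have := h1.div h3 hden
  refine this.congr_deriv ?_
  obtain ⟨M, rfl⟩ : ∃ M, n = M+1 := ⟨n-1, by omega⟩
  simp only [Nat.add_sub_cancel, pow_succ]
  have hden2 : (u^M*u + (1-u)^M*(1-u)) ≠ 0 := by
    simpa [pow_succ] using hden
  field_simp
  ring

lemma phiN_mem (n : ℕ) {u : ℝ} (hu : u ∈ Set.Ioo (0:ℝ) 1) :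
    phiN n u ∈ Set.Ioo (0:ℝ) 1 := by
  obtain ⟨h0, h1⟩ := hu
  have hu' := pow_pos h0 n
  have h1u := pow_pos (by linarith : (0:ℝ) < 1-u) n
  have hden := den_pos n ⟨h0, h1⟩
  unfold phiN
  constructor
  · exact div_pos hu' hden
  · rw [div_lt_one hden]; linarith

lemma phiN_injOn (n : ℕ) (hodd : Odd n) : Set.InjOn (phiN n) (Set.Ioo (0:ℝ) 1) := by
  intro x hx y hy h
  have hdx := (den_pos n hx).ne'
  have hdy := (den_pos n hy).ne'
  unfold phiN at h
  rw [div_eq_div_iff (den_pos n hx).ne' (den_pos n hy).ne'] at h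
  have h2 : x^n * (1-y)^n = y^n * (1-x)^n := by ring_nf at h ⊢; linarith [h]
  have h3 : (x*(1-y))^n = (y*(1-x))^n := by rw [mul_pow, mul_pow]; exact h2
  have h4 : x*(1-y) = y*(1-x) := hodd.strictMono_pow.injective h3
  obtain ⟨hx0, hx1⟩ := hx; obtain ⟨hy0, hy1⟩ := hy
  nlinarith [h4]

lemma phiN_image (n : ℕ) (hn : 0 < n) :
    phiN n '' (Set.Ioo (0:ℝ) 1) = Set.Ioo (0:ℝ) 1 := by
  apply Set.Subset.antisymm
  · rintro _ ⟨u, hu, rfl⟩; exact phiN_mem n hu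
  · rintro w ⟨hw0, hw1⟩
    have h1w : (0:ℝ) < 1 - w := by linarith
    set t : ℝ := (w/(1-w)) ^ ((n:ℝ)⁻¹) with ht
    have htpos : 0 < t := Real.rpow_pos_of_pos (div_pos hw0 h1w) _
    have htn : t ^ n = w/(1-w) := Real.rpow_inv_natCast_pow (le_of_lt (div_pos hw0 h1w)) hn.ne'
    refine ⟨t/(1+t), ⟨div_pos htpos (by linarith), ?_⟩, ?_⟩
    · rw [div_lt_one (by linarith)]; linarith
    · have h1t : (0:ℝ) < 1+t := by linarith
      have hsub : 1 - t/(1+t) = 1/(1+t) := by field_simp; ring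
      unfold phiN
      rw [hsub, div_pow, div_pow, one_pow, ← add_div, htn]
      have h1wn : ((1+t):ℝ)^n ≠ 0 := by positivity
      field_simp
      ring

open Finset Set in
lemma integrand_eq (n : ℕ) (hn : 0 < n) (a b : ℝ) {u : ℝ} (hu : u ∈ Set.Ioo (0:ℝ) 1) :
    u ^ ((n:ℝ)*b - a - 1) * (1-u) ^ (a-1) * ((1-u)^n + u^n) ^ (-b)
      = ((n:ℝ) * u^(n-1) * (1-u)^(n-1) / (u^n + (1-u)^n)^2) *
        ((1/(n:ℝ)) * (phiN n u) ^ (b - a/(n:ℝ) - 1) * (1 - phiN n u) ^ (a/(n:ℝ) - 1)) := by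
  obtain ⟨hX, hu1⟩ := hu
  have hY : (0:ℝ) < 1 - u := by linarith
  have hD : (0:ℝ) < u^n + (1-u)^n := by positivity
  have hphi : phiN n u = u^n / (u^n + (1-u)^n) := rfl
  have h1phi : 1 - phiN n u = (1-u)^n / (u^n + (1-u)^n) := by
    unfold phiN; field_simp; ring
  have hcomm : (1-u)^n + u^n = u^n + (1-u)^n := by ring
  rw [h1phi, hphi, hcomm,
    Real.div_rpow (by positivity) hD.le, Real.div_rpow (by positivity) hD.le]
  have pr : ∀ x:ℝ, 0 < x → ∀ r:ℝ, (x^n:ℝ)^r = x^((n:ℝ)*r) :=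
    fun x hx r => by rw [← Real.rpow_natCast x n, ← Real.rpow_mul hx.le]
  rw [pr u hX, pr (1-u) hY]
  -- convert nat powers n-1 and 2 to rpow
  have pn1 : ∀ x:ℝ, 0 < x → x^(n-1) = x^((n:ℝ)-1) := fun x hx => by
    rw [← Real.rpow_natCast x (n-1)]
    congr 1
    push_cast [Nat.cast_sub hn]
    ring
  have p2 : (u^n + (1-u)^n)^2 = (u^n+(1-u)^n)^((2:ℕ):ℝ) := by
    rw [Real.rpow_natCast]
  rw [pn1 u hX, pn1 (1-u) hY, p2]
  -- now express divisions as negative powers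
  rw [div_eq_mul_inv, ← Real.rpow_neg hD.le, div_eq_mul_inv (u ^ ((n:ℝ) * (b - a / ↑n - 1))),
    ← Real.rpow_neg hD.le, div_eq_mul_inv ((1-u) ^ ((n:ℝ) * (a / ↑n - 1))), ← Real.rpow_neg hD.le]
  have hn' : (n:ℝ) ≠ 0 := Nat.cast_ne_zero.mpr hn.ne'
  calc u ^ ((n:ℝ)*b - a - 1) * (1-u) ^ (a-1) * (u^n + (1-u)^n) ^ (-b)
      = ((n:ℝ) * (1/(n:ℝ))) * (u^((n:ℝ)-1) * u^((n:ℝ)*(b - a/(n:ℝ) - 1))) *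
        ((1-u)^((n:ℝ)-1) * (1-u)^((n:ℝ)*(a/(n:ℝ)-1))) *
        ((u^n+(1-u)^n)^(-(((2:ℕ):ℝ))) * (u^n+(1-u)^n)^(-(b - a/(n:ℝ) - 1)) *
          (u^n+(1-u)^n)^(-(a/(n:ℝ)-1))) := by
        rw [← Real.rpow_add hX, ← Real.rpow_add hY, ← Real.rpow_add hD, ← Real.rpow_add hD]
        have e1 : (n:ℝ)-1 + (n:ℝ)*(b - a/(n:ℝ) - 1) = (n:ℝ)*b - a - 1 := by field_simp; ring
        have e2 : (n:ℝ)-1 + (n:ℝ)*(a/(n:ℝ)-1) = a - 1 := by field_simp; ring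
        have e3 : -(((2:ℕ):ℝ)) + -(b - a/(n:ℝ) - 1) + -(a/(n:ℝ)-1) = -b := by push_cast; field_simp; ring
        rw [e1, e2, e3, mul_one_div_cancel hn', one_mul]
    _ = _ := by ring

open Finset Set in
lemma key_integral (n : ℕ) (hodd : Odd n) (a b : ℝ) (ha : 0 < a) (hb : 0 < b) :
    ∫ u in Set.Ioo (0:ℝ) 1, ((↑(u ^ ((n:ℝ)*b - a - 1) * (1-u) ^ (a-1) *
        ((1-u)^n + u^n) ^ (-b)) : ℂ))
      = ((n:ℂ))⁻¹ * Complex.betaIntegral ((b - a/(n:ℝ) : ℝ):ℂ) ((a/(n:ℝ) : ℝ):ℂ) := by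
  have hn : 0 < n := hodd.pos
  set g : ℝ → ℂ := fun w => ((n:ℂ))⁻¹ *
    ((w:ℂ) ^ (((b - a/(n:ℝ) : ℝ):ℂ) - 1) * ((1:ℂ)-(w:ℂ)) ^ (((a/(n:ℝ) : ℝ):ℂ) - 1)) with hg
  have hderiv : ∀ u ∈ Set.Ioo (0:ℝ) 1, HasDerivWithinAt (phiN n)
      ((n:ℝ) * u^(n-1) * (1-u)^(n-1) / (u^n + (1-u)^n)^2) (Set.Ioo (0:ℝ) 1) u :=
    fun u hu => (phiN_hasDeriv n hn hu).hasDerivWithinAt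
  have himg := integral_image_eq_integral_abs_deriv_smul measurableSet_Ioo hderiv
    (phiN_injOn n hodd) g
  rw [phiN_image n hn] at himg
  have hcongr : ∀ u ∈ Set.Ioo (0:ℝ) 1,
      ((↑(u ^ ((n:ℝ)*b - a - 1) * (1-u) ^ (a-1) * ((1-u)^n + u^n) ^ (-b)) : ℂ))
      = |(n:ℝ) * u^(n-1) * (1-u)^(n-1) / (u^n + (1-u)^n)^2| • g (phiN n u) := by
    intro u hu
    obtain ⟨hu0, hu1⟩ := hu
    have h1u : (0:ℝ) < 1 - u := by linarith
    have hD := den_pos n ⟨hu0, hu1⟩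
    have hderpos : 0 < (n:ℝ) * u^(n-1) * (1-u)^(n-1) / (u^n + (1-u)^n)^2 := by
      have h1 := pow_pos hu0 (n-1)
      have h2 := pow_pos h1u (n-1)
      have h3 : (0:ℝ) < (n:ℝ) := by exact_mod_cast hn
      positivity
    obtain ⟨hp0, hp1⟩ := phiN_mem n ⟨hu0, hu1⟩
    have h1p : (0:ℝ) < 1 - phiN n u := by linarith
    rw [abs_of_pos hderpos, hg]
    simp only
    have c1 : ((phiN n u : ℝ):ℂ) ^ (((b - a/(n:ℝ) : ℝ):ℂ) - 1)
        = ((phiN n u ^ (b - a/(n:ℝ) - 1) : ℝ) : ℂ) := by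
      rw [show (((b - a/(n:ℝ) : ℝ):ℂ) - 1) = ((b - a/(n:ℝ) - 1 : ℝ) : ℂ) by push_cast; ring,
        Complex.ofReal_cpow hp0.le]
    have c2 : ((1:ℂ)-((phiN n u : ℝ):ℂ)) ^ (((a/(n:ℝ) : ℝ):ℂ) - 1)
        = ((( 1 - phiN n u) ^ (a/(n:ℝ) - 1) : ℝ) : ℂ) := by
      rw [show ((1:ℂ)-((phiN n u : ℝ):ℂ)) = (((1 - phiN n u : ℝ)):ℂ) by push_cast; ring,
        show (((a/(n:ℝ) : ℝ):ℂ) - 1) = ((a/(n:ℝ) - 1 : ℝ) : ℂ) by push_cast; ring,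
        Complex.ofReal_cpow h1p.le]
    rw [c1, c2]
    rw [integrand_eq n hn a b ⟨hu0, hu1⟩]
    rw [show ((n:ℂ))⁻¹ = (((1/(n:ℝ)) : ℝ) : ℂ) by push_cast; ring]
    rw [Complex.real_smul]
    push_cast
    ring
  rw [MeasureTheory.setIntegral_congr_fun measurableSet_Ioo hcongr, ← himg]
  -- now compute ∫ g over Ioo = (n)⁻¹ * betaIntegral
  rw [show (Set.Ioo (0:ℝ) 1) = (Set.Ioo (0:ℝ) 1) from rfl]
  rw [← MeasureTheory.integral_Ioc_eq_integral_Ioo,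
    ← intervalIntegral.integral_of_le (zero_le_one)]
  rw [hg]
  rw [intervalIntegral.integral_const_mul]
  rfl

open Finset Set in
lemma zroot_cos_sin (n k : ℕ) :
    (1:ℂ) + (Real.cos ((2*(k:ℝ)-1)*Real.pi/(n:ℝ)) : ℝ) +
      Complex.I * (Real.sin ((2*(k:ℝ)-1)*Real.pi/(n:ℝ)) : ℝ) = 1 + zroot n k := by
  unfold zroot
  rw [Complex.exp_mul_I, ← Complex.ofReal_cos, ← Complex.ofReal_sin]
  ring

lemma Gamma_ofReal_ne_zero {x : ℝ} (hx : 0 < x) : Complex.Gamma (x:ℂ) ≠ 0 := by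
  apply Complex.Gamma_ne_zero
  intro k h
  rw [← Complex.ofReal_natCast, ← Complex.ofReal_neg] at h
  have hk := Complex.ofReal_injective h
  have : (0:ℝ) ≤ (k:ℝ) := Nat.cast_nonneg k
  linarith

open Finset Set in
theorem lauricella_odd_value (m : ℕ) (hm : 2 ≤ m) (a b : ℝ) (ha : 0 < a) (hb : 0 < b)
    (hab : a < ((2 * m - 1 : ℕ) : ℝ) * b) :
    lauricellaFD (2 * m - 2) (((2 * m - 1 : ℕ) : ℂ) * b - a) (fun _ => (b : ℂ))
      (((2 * m - 1 : ℕ) : ℂ) * b)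
      (fun j =>
        let k : ℕ := if j.1 + 1 < m then j.1 + 1 else j.1 + 2
        1 + Real.cos ((2 * (k : ℝ) - 1) * Real.pi / ((2 * m - 1 : ℕ) : ℝ)) +
          Complex.I * Real.sin ((2 * (k : ℝ) - 1) * Real.pi / ((2 * m - 1 : ℕ) : ℝ))) =
    (1 / ((2 * m - 1 : ℕ) : ℂ)) *
      (Complex.Gamma ((a : ℂ) / ((2 * m - 1 : ℕ) : ℂ)) *
        Complex.Gamma (((2 * m - 1 : ℕ) : ℂ) * b) *
        Complex.Gamma ((((2 * m - 1 : ℕ) : ℂ) * b - a) / ((2 * m - 1 : ℕ) : ℂ))) /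
      (Complex.Gamma (a : ℂ) * Complex.Gamma (b : ℂ) *
        Complex.Gamma (((2 * m - 1 : ℕ) : ℂ) * b - a)) := by
  have hodd : Odd (2*m-1) := ⟨m-1, by omega⟩
  have hn : 0 < 2*m-1 := by omega
  have hNC : ((2*m-1:ℕ):ℂ) ≠ 0 := Nat.cast_ne_zero.mpr (by omega)
  have hNR : (0:ℝ) < ((2*m-1:ℕ):ℝ) := by exact_mod_cast hn
  unfold lauricellaFD
  -- rewrite the integral
  have hint : (∫ u in (0:ℝ)..1, (u : ℂ) ^ ((((2 * m - 1 : ℕ) : ℂ) * b - a) - 1) *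
      ((1 : ℂ) - u) ^ ((((2 * m - 1 : ℕ) : ℂ) * b) - (((2 * m - 1 : ℕ) : ℂ) * b - a) - 1) *
      ∏ k : Fin (2*m-2), ((1 : ℂ) - (1 + Real.cos ((2 * ((if (k:ℕ)+1 < m then (k:ℕ)+1 else (k:ℕ)+2 : ℕ) : ℝ) - 1) * Real.pi / ((2 * m - 1 : ℕ) : ℝ)) +
          Complex.I * Real.sin ((2 * ((if (k:ℕ)+1 < m then (k:ℕ)+1 else (k:ℕ)+2 : ℕ) : ℝ) - 1) * Real.pi / ((2 * m - 1 : ℕ) : ℝ))) * u) ^ (-(b:ℂ)))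
      = ∫ u in Set.Ioo (0:ℝ) 1, ((↑(u ^ ((((2*m-1:ℕ)):ℝ)*b - a - 1) * (1-u) ^ (a-1) *
        ((1-u)^(2*m-1) + u^(2*m-1)) ^ (-b)) : ℂ)) := by
    rw [intervalIntegral.integral_of_le zero_le_one,
      MeasureTheory.integral_Ioc_eq_integral_Ioo]
    apply MeasureTheory.setIntegral_congr_fun measurableSet_Ioo
    intro u hu
    dsimp only
    obtain ⟨hu0, hu1⟩ := hu
    have h1u : (0:ℝ) < 1 - u := by linarith
    have e1 : ((((2 * m - 1 : ℕ) : ℂ) * b - a) - 1) = ((((2*m-1:ℕ):ℝ)*b - a - 1 : ℝ) : ℂ) := by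
      push_cast; ring
    have e2 : ((((2 * m - 1 : ℕ) : ℂ) * b) - (((2 * m - 1 : ℕ) : ℂ) * b - a) - 1)
        = ((a - 1 : ℝ) : ℂ) := by push_cast; ring
    rw [e1, e2, ← Complex.ofReal_cpow hu0.le,
      show ((1:ℂ) - (u:ℂ)) = ((1-u:ℝ):ℂ) by push_cast; ring,
      ← Complex.ofReal_cpow h1u.le]
    have hprod : ∏ k : Fin (2*m-2), ((1 : ℂ) - (1 + Real.cos ((2 * ((if (k:ℕ)+1 < m then (k:ℕ)+1 else (k:ℕ)+2 : ℕ) : ℝ) - 1) * Real.pi / ((2 * m - 1 : ℕ) : ℝ)) +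
          Complex.I * Real.sin ((2 * ((if (k:ℕ)+1 < m then (k:ℕ)+1 else (k:ℕ)+2 : ℕ) : ℝ) - 1) * Real.pi / ((2 * m - 1 : ℕ) : ℝ))) * (u:ℂ)) ^ (-(b:ℂ))
        = ((((1-u)^(2*m-1) + u^(2*m-1)) ^ (-b) : ℝ) : ℂ) := by
      rw [← prod_cpow_eq m hm b u ⟨hu0, hu1⟩]
      apply Finset.prod_congr rfl
      intro j _
      congr 2
      rw [← zroot_cos_sin (2*m-1) (if (j:ℕ)+1 < m then (j:ℕ)+1 else (j:ℕ)+2)]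
    rw [hprod]
    push_cast
    ring
  rw [hint, key_integral (2*m-1) hodd a b ha hb]
  -- Beta = Gamma ratio
  have hpq : ((b - a/(((2*m-1:ℕ)):ℝ) : ℝ):ℂ) + ((a/(((2*m-1:ℕ)):ℝ) : ℝ):ℂ) = (b:ℂ) := by
    rw [← Complex.ofReal_add]; norm_num
  have hppos : (0:ℝ) < b - a/(((2*m-1:ℕ)):ℝ) := by
    rw [sub_pos, div_lt_iff₀ hNR]; linarith
  have hqpos : (0:ℝ) < a/(((2*m-1:ℕ)):ℝ) := div_pos ha hNR
  have hGb := Gamma_ofReal_ne_zero hb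
  have hbeta := Complex.Gamma_mul_Gamma_eq_betaIntegral
    (by simpa using hppos : 0 < (((b - a/(((2*m-1:ℕ)):ℝ) : ℝ):ℂ)).re)
    (by simpa using hqpos : 0 < (((a/(((2*m-1:ℕ)):ℝ) : ℝ):ℂ)).re)
  rw [hpq] at hbeta
  have hGa := Gamma_ofReal_ne_zero ha
  have hGA : Complex.Gamma (((2 * m - 1 : ℕ) : ℂ) * b - a) ≠ 0 := by
    rw [show (((2 * m - 1 : ℕ) : ℂ) * b - a) = ((((2*m-1:ℕ):ℝ)*b - a : ℝ):ℂ) by push_cast; ring]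
    exact Gamma_ofReal_ne_zero (by linarith)
  have hBval : Complex.betaIntegral ((b - a/(((2*m-1:ℕ)):ℝ) : ℝ):ℂ) ((a/(((2*m-1:ℕ)):ℝ) : ℝ):ℂ)
      = Complex.Gamma ((b - a/(((2*m-1:ℕ)):ℝ) : ℝ):ℂ) * Complex.Gamma ((a/(((2*m-1:ℕ)):ℝ) : ℝ):ℂ)
        / Complex.Gamma (b:ℂ) := by
    rw [eq_div_iff hGb, hbeta]; ring
  rw [hBval]
  -- identify Gammas in RHS
  have hq' : ((a:ℂ) / ((2 * m - 1 : ℕ) : ℂ)) = ((a/(((2*m-1:ℕ)):ℝ) : ℝ):ℂ) := by push_cast; ring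
  have hp' : ((((2 * m - 1 : ℕ) : ℂ) * b - a) / ((2 * m - 1 : ℕ) : ℂ))
      = ((b - a/(((2*m-1:ℕ)):ℝ) : ℝ):ℂ) := by
    have h2m : ((2*m-1:ℕ):ℂ) = 2*(m:ℂ)-1 := by
      push_cast [Nat.cast_sub (show 1 ≤ 2*m by omega)]; ring
    have h2m' : (2*(m:ℂ)-1) ≠ 0 := h2m ▸ hNC
    push_cast
    field_simp
  rw [hq', hp',
    show (((2 * m - 1 : ℕ) : ℂ) * b) - (((2 * m - 1 : ℕ) : ℂ) * b - a) = (a:ℂ) by ring]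
  field_simp
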